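/- Let H = (V,E) be a proper Eulerian hypergraph, let 𝒱 be its valid Gram space, and let B be any basis of 𝒱 (as a subspace of the V×V matrices over ZMod 2). Then H has a k-qubit Pauli-based magic assignment for some k ≥ 1 if and only if B contains a magic Gram matrix. -/

import Mathlib

open Matrix Finset

/-! ### Pauli matrices and observables -/

/-- The Pauli `X` matrix. -/
noncomputable def PX : Matrix (Fin 2) (Fin 2) ℂ := !![0, 1; 1, 0]

/-- The Pauli `Y` matrix. -/
noncomputable def PY : Matrix (Fin 2) (Fin 2) ℂ := !![0, -Complex.I; Complex.I, 0]

/-- The Pauli `Z` matrix. -/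
noncomputable def PZ : Matrix (Fin 2) (Fin 2) ℂ := !![1, 0; 0, -1]

/-- The Kronecker (tensor) product of `k` 2×2 matrices, realized as a matrix indexed by
`Fin k → Fin 2` (a type of cardinality `2^k`). -/
noncomputable def pauliTensor (k : ℕ) (P : Fin k → Matrix (Fin 2) (Fin 2) ℂ) :
    Matrix (Fin k → Fin 2) (Fin k → Fin 2) ℂ :=
  Matrix.of fun f g => ∏ i, P i (f i) (g i)

/-- A `k`-qubit Pauli observable: `ε · (P₁ ⊗ ⋯ ⊗ P_k)` with `ε ∈ {1,-1}` and each
`P_i ∈ {I, X, Y, Z}`. -/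
def IsPauliObservable {k : ℕ} (A : Matrix (Fin k → Fin 2) (Fin k → Fin 2) ℂ) : Prop :=
  ∃ (ε : ℂ) (P : Fin k → Matrix (Fin 2) (Fin 2) ℂ),
    (ε = 1 ∨ ε = -1) ∧ (∀ i, P i = 1 ∨ P i = PX ∨ P i = PY ∨ P i = PZ) ∧
    A = ε • pauliTensor k P

/-! ### Hypergraphs -/

/-- Product of the observables assigned to the vertices of a hyperedge (taken in increasing
order of the vertices; for commuting observables this is the product in any order). -/
noncomputable def edgeProd {V n : Type*} [LinearOrder V] [Fintype n] [DecidableEq n]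
    (α : V → Matrix n n ℂ) (e : Finset V) : Matrix n n ℂ :=
  ((e.sort (· ≤ ·)).map α).prod

/-- A proper Eulerian hypergraph: each vertex lies in an even number of hyperedges, there are
no isolated vertices, no empty hyperedges, and all hyperedges are distinct. -/
def ProperEulerian {V E : Type*} [DecidableEq V] [Fintype E] (edge : E → Finset V) : Prop :=
  (∀ v : V, Even (Finset.univ.filter (fun e : E => v ∈ edge e)).card) ∧
  (∀ v : V, ∃ e : E, v ∈ edge e) ∧
  (∀ e : E, (edge e).Nonempty) ∧
  Function.Injective edge

/-- A valid Gram matrix for a hypergraph. -/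
def IsValidGram {V E : Type*} (edge : E → Finset V) (M : Matrix V V (ZMod 2)) : Prop :=
  M.IsSymm ∧ (∀ v, M v v = 0) ∧
  (∀ e : E, ∀ u ∈ edge e, ∀ v ∈ edge e, M u v = 0) ∧
  (∀ e : E, ∀ v : V, ∑ u ∈ edge e, M u v = 0)

/-- The concatenated list of vertices of the hyperedges, each hyperedge's vertices listed in
increasing order, hyperedges enumerated by the list `le`. -/
def vertexList {V E : Type*} [LinearOrder V] (edge : E → Finset V) (le : List E) : List V :=
  (le.map fun e => (edge e).sort (· ≤ ·)).flatten

/-- The inversion sum `s(M) = ∑_{i<j, L_i > L_j} M_{L_i, L_j}`. -/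
def inversionSum {V : Type*} [LinearOrder V] (M : Matrix V V (ZMod 2)) (L : List V) : ZMod 2 :=
  ∑ i : Fin L.length, ∑ j : Fin L.length,
    if i < j ∧ L.get j < L.get i then M (L.get i) (L.get j) else 0

/-- A magic Gram matrix: a valid Gram matrix with inversion sum 1. -/
def MagicGram {V E : Type*} [LinearOrder V] (edge : E → Finset V) (le : List E)
    (M : Matrix V V (ZMod 2)) : Prop :=
  IsValidGram edge M ∧ inversionSum M (vertexList edge le) = 1

/-- A `k`-qubit Pauli-based magic assignment of a hypergraph. -/
def IsPauliMagicAssignment {V E : Type*} [LinearOrder V] [Fintype E] (k : ℕ)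
    (edge : E → Finset V) (α : V → Matrix (Fin k → Fin 2) (Fin k → Fin 2) ℂ) : Prop :=
  (∀ v, IsPauliObservable (α v)) ∧
  (∀ e : E, ∀ u ∈ edge e, ∀ w ∈ edge e, Commute (α u) (α w)) ∧
  (∀ e : E, edgeProd α (edge e) = 1 ∨ edgeProd α (edge e) = -1) ∧
  Odd (Nat.card {e : E // edgeProd α (edge e) = -1})

/-- A magic assignment of a hypergraph by Hermitian matrices squaring to the identity. -/
def IsMagicAssignment {V E n : Type*} [LinearOrder V] [Fintype E] [Fintype n] [DecidableEq n]
    (edge : E → Finset V) (α : V → Matrix n n ℂ) : Prop :=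
  (∀ v, (α v).IsHermitian) ∧ (∀ v, α v * α v = 1) ∧
  (∀ e : E, ∀ u ∈ edge e, ∀ w ∈ edge e, Commute (α u) (α w)) ∧
  (∀ e : E, edgeProd α (edge e) = 1 ∨ edgeProd α (edge e) = -1) ∧
  Odd (Nat.card {e : E // edgeProd α (edge e) = -1})

open scoped Classical in
/-- The sign vector `c(α) ∈ (ZMod 2)^E` of an assignment: `0` on hyperedges with product `+I`,
`1` on the others. -/
noncomputable def cvec {V E n : Type*} [LinearOrder V] [Fintype E] [Fintype n] [DecidableEq n]
    (edge : E → Finset V) (α : V → Matrix n n ℂ) : E → ZMod 2 :=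
  fun e => if edgeProd α (edge e) = 1 then 0 else 1

/-- The incidence matrix of a hypergraph. -/
def incMatrix {V E : Type*} [DecidableEq V] (edge : E → Finset V) : Matrix V E (ZMod 2) :=
  Matrix.of fun v e => if v ∈ edge e then 1 else 0

/-- Hamming weight of a vector over `ZMod 2`. -/
def hWeight {E : Type*} [Fintype E] (y : E → ZMod 2) : ℕ :=
  (Finset.univ.filter fun e => y e ≠ 0).card

/-- The symplectic product on `(ZMod 2)^{2k}` (coordinates indexed by `Fin k ⊕ Fin k`). -/
def sympl (k : ℕ) (s t : Fin k ⊕ Fin k → ZMod 2) : ZMod 2 :=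
  ∑ i : Fin k, (s (Sum.inl i) * t (Sum.inr i) + s (Sum.inr i) * t (Sum.inl i))

lemma z2 (a : ZMod 2) : a = 0 ∨ a = 1 := by revert a; decide

noncomputable def eps (a : ZMod 2) : ℂ := if a = 0 then 1 else -1

lemma eps_add (a b : ZMod 2) : eps (a + b) = eps a * eps b := by
  rcases z2 a with h | h <;> rcases z2 b with h' | h' <;> subst h <;> subst h' <;>
    simp +decide [eps] <;> norm_num

lemma eps_ne_zero (a : ZMod 2) : eps a ≠ 0 := by
  rcases z2 a with h | h <;> subst h <;> simp +decide [eps]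

lemma eps_zero : eps 0 = 1 := by simp [eps]
lemma eps_one : eps 1 = -1 := by simp +decide [eps]
lemma eps_eq_one_iff (a : ZMod 2) : eps a = 1 ↔ a = 0 := by
  rcases z2 a with h | h <;> subst h <;> simp +decide [eps] <;> norm_num
lemma eps_mem (a : ZMod 2) : eps a = 1 ∨ eps a = -1 := by
  rcases z2 a with h | h <;> subst h <;> simp +decide [eps]

noncomputable def sig (s : ZMod 2 × ZMod 2) : Matrix (Fin 2) (Fin 2) ℂ :=
  if s = (0,0) then 1 else if s = (1,0) then PX else if s = (0,1) then PZ else PY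

lemma sig00 : sig 0 = !![1,0;0,1] := by
  rw [sig, if_pos (by decide)]; exact Matrix.one_fin_two
lemma sig10 : sig (1,0) = !![0, 1; 1, 0] := by
  rw [sig, if_neg (by decide), if_pos rfl]; rfl
lemma sig01 : sig (0,1) = !![1, 0; 0, -1] := by
  rw [sig, if_neg (by decide), if_neg (by decide), if_pos rfl]; rfl
lemma sig11 : sig 1 = !![0, -Complex.I; Complex.I, 0] := by
  rw [sig, if_neg (by decide), if_neg (by decide), if_neg (by decide)]; rfl

def sp (s t : ZMod 2 × ZMod 2) : ZMod 2 := s.1 * t.2 + s.2 * t.1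

lemma z2pair (s : ZMod 2 × ZMod 2) : s = 0 ∨ s = (1,0) ∨ s = (0,1) ∨ s = 1 := by
  revert s; decide

lemma sig_mem (s : ZMod 2 × ZMod 2) :
    sig s = 1 ∨ sig s = PX ∨ sig s = PY ∨ sig s = PZ := by
  rcases z2pair s with h | h | h | h <;> subst h <;>
    simp [sig00, sig10, sig01, sig11, PX, PY, PZ, Matrix.one_fin_two]

lemma sig_sq (s : ZMod 2 × ZMod 2) : sig s * sig s = 1 := by
  rcases z2pair s with h | h | h | h <;> subst h <;>
    simp [sig00, sig10, sig01, sig11, Matrix.mul_fin_two, Matrix.one_fin_two] <;>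
    norm_num [Complex.I_mul_I]

lemma smul_fin2 (c : ℂ) (a b d e : ℂ) : c • !![a,b;d,e] = !![c*a,c*b;c*d,c*e] := by
  ext i j; fin_cases i <;> fin_cases j <;> simp

lemma sig_comm (s t : ZMod 2 × ZMod 2) :
    sig s * sig t = eps (sp s t) • (sig t * sig s) := by
  rcases z2pair s with h | h | h | h <;> rcases z2pair t with h' | h' | h' | h' <;>
    subst h <;> subst h' <;>
    simp +decide [sig00, sig10, sig01, sig11, sp, eps, Matrix.mul_fin_two, smul_fin2] <;>
    norm_num [Complex.I_mul_I]


lemma sig_mul_exists (s t : ZMod 2 × ZMod 2) :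
    ∃ c : ℂ, c ≠ 0 ∧ sig s * sig t = c • sig (s + t) := by
  rcases z2pair s with h | h | h | h <;> rcases z2pair t with h' | h' | h' | h' <;>
      subst h <;> subst h'
  · exact ⟨1, by norm_num [Complex.I_ne_zero], by
      rw [show ((0 : ZMod 2 × ZMod 2) + 0) = 0 from by decide]
      norm_num [sig00, sig10, sig01, sig11, Matrix.mul_fin_two, smul_fin2, Complex.I_mul_I]⟩
  · exact ⟨1, by norm_num [Complex.I_ne_zero], by
      rw [show ((0 : ZMod 2 × ZMod 2) + (1,0)) = (1,0) from by decide]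
      norm_num [sig00, sig10, sig01, sig11, Matrix.mul_fin_two, smul_fin2, Complex.I_mul_I]⟩
  · exact ⟨1, by norm_num [Complex.I_ne_zero], by
      rw [show ((0 : ZMod 2 × ZMod 2) + (0,1)) = (0,1) from by decide]
      norm_num [sig00, sig10, sig01, sig11, Matrix.mul_fin_two, smul_fin2, Complex.I_mul_I]⟩
  · exact ⟨1, by norm_num [Complex.I_ne_zero], by
      rw [show ((0 : ZMod 2 × ZMod 2) + 1) = 1 from by decide]
      norm_num [sig00, sig10, sig01, sig11, Matrix.mul_fin_two, smul_fin2, Complex.I_mul_I]⟩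
  · exact ⟨1, by norm_num [Complex.I_ne_zero], by
      rw [show (((1,0) : ZMod 2 × ZMod 2) + 0) = (1,0) from by decide]
      norm_num [sig00, sig10, sig01, sig11, Matrix.mul_fin_two, smul_fin2, Complex.I_mul_I]⟩
  · exact ⟨1, by norm_num [Complex.I_ne_zero], by
      rw [show (((1,0) : ZMod 2 × ZMod 2) + (1,0)) = 0 from by decide]
      norm_num [sig00, sig10, sig01, sig11, Matrix.mul_fin_two, smul_fin2, Complex.I_mul_I]⟩
  · exact ⟨-Complex.I, by norm_num [Complex.I_ne_zero], by
      rw [show (((1,0) : ZMod 2 × ZMod 2) + (0,1)) = 1 from by decide]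
      norm_num [sig00, sig10, sig01, sig11, Matrix.mul_fin_two, smul_fin2, Complex.I_mul_I]⟩
  · exact ⟨Complex.I, by norm_num [Complex.I_ne_zero], by
      rw [show (((1,0) : ZMod 2 × ZMod 2) + 1) = (0,1) from by decide]
      norm_num [sig00, sig10, sig01, sig11, Matrix.mul_fin_two, smul_fin2, Complex.I_mul_I]⟩
  · exact ⟨1, by norm_num [Complex.I_ne_zero], by
      rw [show (((0,1) : ZMod 2 × ZMod 2) + 0) = (0,1) from by decide]
      norm_num [sig00, sig10, sig01, sig11, Matrix.mul_fin_two, smul_fin2, Complex.I_mul_I]⟩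
  · exact ⟨Complex.I, by norm_num [Complex.I_ne_zero], by
      rw [show (((0,1) : ZMod 2 × ZMod 2) + (1,0)) = 1 from by decide]
      norm_num [sig00, sig10, sig01, sig11, Matrix.mul_fin_two, smul_fin2, Complex.I_mul_I]⟩
  · exact ⟨1, by norm_num [Complex.I_ne_zero], by
      rw [show (((0,1) : ZMod 2 × ZMod 2) + (0,1)) = 0 from by decide]
      norm_num [sig00, sig10, sig01, sig11, Matrix.mul_fin_two, smul_fin2, Complex.I_mul_I]⟩
  · exact ⟨-Complex.I, by norm_num [Complex.I_ne_zero], by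
      rw [show (((0,1) : ZMod 2 × ZMod 2) + 1) = (1,0) from by decide]
      norm_num [sig00, sig10, sig01, sig11, Matrix.mul_fin_two, smul_fin2, Complex.I_mul_I]⟩
  · exact ⟨1, by norm_num [Complex.I_ne_zero], by
      rw [show ((1 : ZMod 2 × ZMod 2) + 0) = 1 from by decide]
      norm_num [sig00, sig10, sig01, sig11, Matrix.mul_fin_two, smul_fin2, Complex.I_mul_I]⟩
  · exact ⟨-Complex.I, by norm_num [Complex.I_ne_zero], by
      rw [show ((1 : ZMod 2 × ZMod 2) + (1,0)) = (0,1) from by decide]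
      norm_num [sig00, sig10, sig01, sig11, Matrix.mul_fin_two, smul_fin2, Complex.I_mul_I]⟩
  · exact ⟨Complex.I, by norm_num [Complex.I_ne_zero], by
      rw [show ((1 : ZMod 2 × ZMod 2) + (0,1)) = (1,0) from by decide]
      norm_num [sig00, sig10, sig01, sig11, Matrix.mul_fin_two, smul_fin2, Complex.I_mul_I]⟩
  · exact ⟨1, by norm_num [Complex.I_ne_zero], by
      rw [show ((1 : ZMod 2 × ZMod 2) + 1) = 0 from by decide]
      norm_num [sig00, sig10, sig01, sig11, Matrix.mul_fin_two, smul_fin2, Complex.I_mul_I]⟩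

lemma tensor_mul (k : ℕ) (P Q : Fin k → Matrix (Fin 2) (Fin 2) ℂ) :
    pauliTensor k P * pauliTensor k Q = pauliTensor k (fun i => P i * Q i) := by
  ext f g
  simp only [pauliTensor, Matrix.mul_apply, Matrix.of_apply]
  simp only [← Finset.prod_mul_distrib]
  conv_rhs => rw [Finset.prod_univ_sum]
  simp [Fintype.piFinset_univ]

lemma tensor_one (k : ℕ) : pauliTensor k (fun _ => (1 : Matrix (Fin 2) (Fin 2) ℂ)) = 1 := by
  ext f g
  simp only [pauliTensor, Matrix.of_apply, Matrix.one_apply]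
  by_cases h : f = g
  · subst h; simp
  · rw [if_neg h]
    obtain ⟨i, hi⟩ := Function.ne_iff.mp h
    exact Finset.prod_eq_zero (Finset.mem_univ i) (Matrix.one_apply_ne hi)

lemma tensor_smul (k : ℕ) (c : Fin k → ℂ) (P Q : Fin k → Matrix (Fin 2) (Fin 2) ℂ)
    (h : ∀ i, P i = c i • Q i) :
    pauliTensor k P = (∏ i, c i) • pauliTensor k Q := by
  ext f g
  simp only [pauliTensor, Matrix.of_apply, Matrix.smul_apply, smul_eq_mul]
  rw [← Finset.prod_mul_distrib]
  exact Finset.prod_congr rfl fun i _ => by rw [h i]; simp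


/-! ### Pauli strings -/

noncomputable def Bmat {k : ℕ} (s : Fin k → ZMod 2 × ZMod 2) :
    Matrix (Fin k → Fin 2) (Fin k → Fin 2) ℂ :=
  pauliTensor k (fun i => sig (s i))

def Sp {k : ℕ} (s t : Fin k → ZMod 2 × ZMod 2) : ZMod 2 := ∑ i, sp (s i) (t i)

lemma Sp_comm {k : ℕ} (s t : Fin k → ZMod 2 × ZMod 2) : Sp s t = Sp t s :=
  Finset.sum_congr rfl fun i _ => by unfold sp; ring

lemma Sp_self {k : ℕ} (s : Fin k → ZMod 2 × ZMod 2) : Sp s s = 0 := by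
  unfold Sp sp
  rw [Finset.sum_eq_zero]
  intro i _
  rw [mul_comm]
  exact (ZMod.natCast_self 2 ▸ by
    have : ((s i).2 * (s i).1) + ((s i).2 * (s i).1) = 0 := by
      have h2 : (2 : ZMod 2) = 0 := by decide
      calc ((s i).2 * (s i).1) + ((s i).2 * (s i).1) = 2 * ((s i).2 * (s i).1) := by ring
        _ = 0 := by rw [h2]; ring
    exact this)

lemma Sp_add_left {k : ℕ} (s t r : Fin k → ZMod 2 × ZMod 2) :
    Sp (s + t) r = Sp s r + Sp t r := by
  unfold Sp sp
  rw [← Finset.sum_add_distrib]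
  exact Finset.sum_congr rfl fun i _ => by simp [Prod.fst_add, Prod.snd_add]; ring

lemma eps_sum {ι : Type*} (s : Finset ι) (g : ι → ZMod 2) :
    eps (∑ i ∈ s, g i) = ∏ i ∈ s, eps (g i) := by
  induction s using Finset.cons_induction with
  | empty => simp [eps_zero]
  | cons a s ha ih => rw [Finset.sum_cons, Finset.prod_cons, eps_add, ih]

lemma Bmat_zero {k : ℕ} : Bmat (0 : Fin k → ZMod 2 × ZMod 2) = 1 := by
  unfold Bmat
  rw [show (fun i : Fin k => sig ((0 : Fin k → ZMod 2 × ZMod 2) i)) = fun _ => 1 from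
    funext fun i => by rw [Pi.zero_apply, sig00, Matrix.one_fin_two]]
  exact tensor_one k

lemma Bmat_sq {k : ℕ} (s : Fin k → ZMod 2 × ZMod 2) : Bmat s * Bmat s = 1 := by
  unfold Bmat
  rw [tensor_mul, show (fun i => sig (s i) * sig (s i)) = fun _ => (1 : Matrix (Fin 2) (Fin 2) ℂ)
    from funext fun i => sig_sq (s i)]
  exact tensor_one k

lemma Bmat_comm {k : ℕ} (s t : Fin k → ZMod 2 × ZMod 2) :
    Bmat s * Bmat t = eps (Sp s t) • (Bmat t * Bmat s) := by
  unfold Bmat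
  rw [tensor_mul, tensor_mul, Sp, eps_sum]
  exact tensor_smul k _ _ _ fun i => sig_comm (s i) (t i)

lemma Bmat_mul_exists {k : ℕ} (s t : Fin k → ZMod 2 × ZMod 2) :
    ∃ c : ℂ, c ≠ 0 ∧ Bmat s * Bmat t = c • Bmat (s + t) := by
  choose c hc hmul using fun i => sig_mul_exists (s i) (t i)
  refine ⟨∏ i, c i, Finset.prod_ne_zero_iff.2 fun i _ => hc i, ?_⟩
  unfold Bmat
  rw [tensor_mul]
  exact tensor_smul k c _ _ fun i => hmul i

lemma Bmat_unit {k : ℕ} (s : Fin k → ZMod 2 × ZMod 2) : IsUnit (Bmat s) :=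
  ⟨⟨Bmat s, Bmat s, Bmat_sq s, Bmat_sq s⟩, rfl⟩

lemma Bmat_ne_zero {k : ℕ} (s : Fin k → ZMod 2 × ZMod 2) : Bmat s ≠ 0 := by
  intro h
  have := Bmat_sq s
  rw [h, zero_mul] at this
  exact one_ne_zero this.symm

lemma sig_diagx {a : ZMod 2 × ZMod 2} (h : a.1 = 1) (f : Fin 2) : sig a f f = 0 := by
  rcases z2pair a with h' | h' | h' | h' <;> subst h' <;> simp_all <;>
    fin_cases f <;> simp [sig10, sig11]

/-- scalar Pauli strings are trivial -/
lemma Bmat_scalar {k : ℕ} (s : Fin k → ZMod 2 × ZMod 2) (c : ℂ) (h : Bmat s = c • 1) :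
    s = 0 := by
  by_contra hs
  obtain ⟨j, hj⟩ : ∃ j, s j ≠ 0 := by
    by_contra h'
    push_neg at h'
    exact hs (funext h')
  by_cases hx : ∃ i, (s i).1 = 1
  · -- diagonal vanishes, so c = 0, contradiction with invertibility
    obtain ⟨i, hi⟩ := hx
    have hdiag : ∀ f, Bmat s f f = 0 := fun f =>
      Finset.prod_eq_zero (Finset.mem_univ i) (sig_diagx hi (f i))
    have hc : c = 0 := by
      have := hdiag (fun _ => 0)
      rw [h] at this
      simpa using this
    rw [hc, zero_smul] at h
    exact Bmat_ne_zero s h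
  · push_neg at hx
    have hxj : ∀ i, (s i).1 = 0 := fun i => by
      rcases z2 (s i).1 with h' | h'
      · exact h'
      · exact absurd h' (hx i)
    have hsj : s j = (0, 1) := by
      rcases z2pair (s j) with h' | h' | h' | h'
      · exact absurd h' hj
      · exact absurd (by rw [h']) (hx j)
      · exact h'
      · exact absurd (by rw [h']; rfl) (hx j)
    -- diagonal entries at f and updated f differ by sign
    set f : Fin k → Fin 2 := fun _ => 0 with hf
    set f' : Fin k → Fin 2 := Function.update f j 1 with hf'
    have hff : Bmat s f f = ∏ i, sig (s i) 0 0 := rfl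
    have h1 : Bmat s f f = 1 := by
      rw [hff]
      apply Finset.prod_eq_one
      intro i _
      rcases z2pair (s i) with h' | h' | h' | h'
      · rw [h', sig00]; norm_num
      · exact absurd (by rw [h']) (hx i)
      · rw [h', sig01]; norm_num
      · exact absurd (by rw [h']; rfl) (hx i)
    have h2 : Bmat s f' f' = -1 := by
      have : Bmat s f' f' = ∏ i, sig (s i) (f' i) (f' i) := rfl
      rw [this, Fintype.prod_eq_single j]
      · rw [hf', Function.update_self, hsj, sig01]; norm_num
      · intro i hi
        rw [hf', Function.update_of_ne hi]
        rcases z2pair (s i) with h' | h' | h' | h'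
        · rw [h', sig00]; norm_num [hf]
        · exact absurd (by rw [h']) (hx i)
        · rw [h', sig01]; norm_num [hf]
        · exact absurd (by rw [h']; rfl) (hx i)
    rw [h] at h1 h2
    simp [Matrix.smul_apply, Matrix.one_apply] at h1 h2
    rw [h1] at h2
    norm_num at h2

/-! ### List-level sign bookkeeping -/

section Lists

variable {V : Type*} [LinearOrder V]
variable {n : Type*} [Fintype n] [DecidableEq n]

/-- inversion term -/
def fterm (M : Matrix V V (ZMod 2)) (x y : V) : ZMod 2 := if y < x then M x y else 0

/-- recursive inversion sum -/
def invS (M : Matrix V V (ZMod 2)) : List V → ZMod 2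
  | [] => 0
  | x :: t => (t.map fun y => fterm M x y).sum + invS M t

def crossS (M : Matrix V V (ZMod 2)) (a b : List V) : ZMod 2 :=
  (a.map fun y => (b.map fun z => fterm M y z).sum).sum

lemma lsum_add {ι : Type*} (l : List ι) (f g : ι → ZMod 2) :
    (l.map f).sum + (l.map g).sum = (l.map fun y => f y + g y).sum := by
  induction l with
  | nil => simp
  | cons x t ih => simp only [List.map_cons, List.sum_cons, ← ih]; abel

lemma zmod2_add_self (a : ZMod 2) : a + a = 0 := by
  have h : (2 : ZMod 2) = 0 := by decide
  calc a + a = 2 * a := by ring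
    _ = 0 := by rw [h]; ring

lemma invS_append (M : Matrix V V (ZMod 2)) (a b : List V) :
    invS M (a ++ b) = invS M a + invS M b + crossS M a b := by
  induction a with
  | nil => simp [invS, crossS]
  | cons y a ih =>
      have h1 : invS M ((y :: a) ++ b)
          = ((a ++ b).map fun z => fterm M y z).sum + invS M (a ++ b) := rfl
      have h2 : invS M (y :: a) = (a.map fun z => fterm M y z).sum + invS M a := rfl
      have h3 : crossS M (y :: a) b
          = (b.map fun z => fterm M y z).sum + crossS M a b := by
        unfold crossS
        rw [List.map_cons, List.sum_cons]
      rw [h1, List.map_append, List.sum_append, ih, h2, h3]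
      abel

lemma fterm_pair (M : Matrix V V (ZMod 2)) (hsym : ∀ u v, M u v = M v u)
    (hdiag : ∀ v, M v v = 0) (x y : V) : fterm M x y + fterm M y x = M x y := by
  rcases lt_trichotomy y x with h | h | h
  · rw [fterm, if_pos h, fterm, if_neg (not_lt.2 h.le), add_zero]
  · subst h; rw [fterm, if_neg (lt_irrefl _), hdiag, add_zero]
  · rw [fterm, if_neg (not_lt.2 h.le), fterm, if_pos h, zero_add, hsym]

lemma invS_surgery (M : Matrix V V (ZMod 2)) (hsym : ∀ u v, M u v = M v u)
    (hdiag : ∀ v, M v v = 0) (x : V) (t₁ t₂ : List V) :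
    invS M (x :: (t₁ ++ x :: t₂)) = (t₁.map fun y => M x y).sum + invS M (t₁ ++ t₂) := by
  have e1 : invS M (x :: (t₁ ++ x :: t₂)) =
      ((t₁ ++ x :: t₂).map fun y => fterm M x y).sum + invS M (t₁ ++ x :: t₂) := rfl
  rw [e1, invS_append, invS_append]
  have e2 : invS M (x :: t₂) = (t₂.map fun y => fterm M x y).sum + invS M t₂ := rfl
  have e3 : crossS M t₁ (x :: t₂) = (t₁.map fun y => fterm M y x).sum + crossS M t₁ t₂ := by
    unfold crossS
    rw [lsum_add]
    exact congrArg List.sum (List.map_congr_left fun y _ => by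
      rw [List.map_cons, List.sum_cons])
  rw [e2, e3]
  simp only [List.map_append, List.sum_append, List.map_cons, List.sum_cons]
  have e4 : ((t₁.map fun y => fterm M x y).sum + (t₁.map fun y => fterm M y x).sum)
      = (t₁.map fun y => M x y).sum := by
    rw [lsum_add]
    exact congrArg List.sum (List.map_congr_left fun y _ => fterm_pair M hsym hdiag x y)
  have e5 : fterm M x x = 0 := by rw [fterm, if_neg (lt_irrefl _)]
  have e6 : (t₂.map fun y => fterm M x y).sum + (t₂.map fun y => fterm M x y).sum = 0 :=
    zmod2_add_self _
  calc (t₁.map fun y => fterm M x y).sum + (fterm M x x + (t₂.map fun y => fterm M x y).sum)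
        + (invS M t₁ + ((t₂.map fun y => fterm M x y).sum + invS M t₂)
          + ((t₁.map fun y => fterm M y x).sum + crossS M t₁ t₂))
      = (((t₁.map fun y => fterm M x y).sum + (t₁.map fun y => fterm M y x).sum)
        + ((t₂.map fun y => fterm M x y).sum + (t₂.map fun y => fterm M x y).sum))
        + fterm M x x + (invS M t₁ + invS M t₂ + crossS M t₁ t₂) := by abel
    _ = (t₁.map fun y => M x y).sum + (invS M t₁ + invS M t₂ + crossS M t₁ t₂) := by
        rw [e4, e5, e6]; abel

lemma listget_sum (t : List V) (g : V → ZMod 2) :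
    (∑ j : Fin t.length, g (t.get j)) = (t.map g).sum := by
  induction t with
  | nil => simp
  | cons x t ih =>
      have h : (∑ j : Fin (x :: t).length, g ((x :: t).get j))
          = g ((x :: t).get (0 : Fin (t.length + 1)))
            + ∑ j : Fin t.length, g ((x :: t).get j.succ) :=
        Fin.sum_univ_succ _
      rw [h]
      simp [ih]

lemma inversionSum_cons (M : Matrix V V (ZMod 2)) (x : V) (t : List V) :
    inversionSum M (x :: t) = (t.map fun y => fterm M x y).sum + inversionSum M t := by
  unfold inversionSum
  have h : (∑ i : Fin (x :: t).length, ∑ j : Fin (x :: t).length,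
        if i < j ∧ (x :: t).get j < (x :: t).get i then M ((x :: t).get i) ((x :: t).get j) else 0)
      = (∑ j : Fin (x :: t).length,
          if (0 : Fin (t.length + 1)) < j ∧ (x :: t).get j < (x :: t).get (0 : Fin (t.length + 1))
            then M ((x :: t).get (0 : Fin (t.length + 1))) ((x :: t).get j) else 0)
        + ∑ i : Fin t.length, ∑ j : Fin (x :: t).length,
          if i.succ < j ∧ (x :: t).get j < (x :: t).get i.succ
            then M ((x :: t).get i.succ) ((x :: t).get j) else 0 :=
    Fin.sum_univ_succ _
  rw [h]
  congr 1
  · have h2 : (∑ j : Fin (x :: t).length,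
          if (0 : Fin (t.length + 1)) < j ∧ (x :: t).get j < (x :: t).get (0 : Fin (t.length + 1))
            then M ((x :: t).get (0 : Fin (t.length + 1))) ((x :: t).get j) else 0)
        = (if (0 : Fin (t.length + 1)) < (0 : Fin (t.length + 1))
              ∧ (x :: t).get (0 : Fin (t.length + 1)) < (x :: t).get (0 : Fin (t.length + 1))
            then M ((x :: t).get (0 : Fin (t.length + 1))) ((x :: t).get (0 : Fin (t.length + 1)))
            else 0)
          + ∑ j : Fin t.length,
            if (0 : Fin (t.length + 1)) < j.succ
                ∧ (x :: t).get j.succ < (x :: t).get (0 : Fin (t.length + 1))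
              then M ((x :: t).get (0 : Fin (t.length + 1))) ((x :: t).get j.succ) else 0 :=
      Fin.sum_univ_succ _
    rw [h2, ← listget_sum t (fun y => fterm M x y)]
    simp [fterm, Fin.succ_pos]
  · apply Finset.sum_congr rfl
    intro i _
    have h3 : (∑ j : Fin (x :: t).length,
          if i.succ < j ∧ (x :: t).get j < (x :: t).get i.succ
            then M ((x :: t).get i.succ) ((x :: t).get j) else 0)
        = (if i.succ < (0 : Fin (t.length + 1))
              ∧ (x :: t).get (0 : Fin (t.length + 1)) < (x :: t).get i.succ
            then M ((x :: t).get i.succ) ((x :: t).get (0 : Fin (t.length + 1))) else 0)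
          + ∑ j : Fin t.length,
            if i.succ < j.succ ∧ (x :: t).get j.succ < (x :: t).get i.succ
              then M ((x :: t).get i.succ) ((x :: t).get j.succ) else 0 :=
      Fin.sum_univ_succ _
    rw [h3]
    simp [Fin.succ_lt_succ_iff]

lemma inversionSum_eq_invS (M : Matrix V V (ZMod 2)) (L : List V) :
    inversionSum M L = invS M L := by
  induction L with
  | nil => simp [inversionSum, invS]
  | cons x t ih => rw [inversionSum_cons, invS, ih]

/-! ### products of Pauli-like matrices over lists -/

variable (M : Matrix V V (ZMod 2)) (β : V → Matrix n n ℂ)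

lemma prod_map_smul {ι : Type*} (l : List ι) (c : ι → ℂ) (g : ι → Matrix n n ℂ) :
    (l.map fun v => c v • g v).prod = (l.map c).prod • (l.map g).prod := by
  induction l with
  | nil => simp
  | cons x t ih =>
      simp only [List.map_cons, List.prod_cons, ih, smul_mul_smul_comm]

lemma prod_move (hcomm : ∀ u v, β u * β v = eps (M u v) • (β v * β u))
    (hsym : ∀ u v, M u v = M v u) (x : V) (t : List V) :
    (t.map β).prod * β x
      = eps ((t.map fun y => M x y).sum) • (β x * (t.map β).prod) := by
  induction t with
  | nil => simp [eps_zero]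
  | cons y t ih =>
      simp only [List.map_cons, List.prod_cons, List.sum_cons]
      rw [mul_assoc, ih, mul_smul_comm, ← mul_assoc, hcomm y x, hsym y x]
      rw [smul_mul_assoc, smul_smul, ← eps_add, add_comm ((t.map fun y => M x y).sum)]
      rw [mul_assoc]

lemma claimB (hcomm : ∀ u v, β u * β v = eps (M u v) • (β v * β u))
    (hsq : ∀ v, β v * β v = 1)
    (hsym : ∀ u v, M u v = M v u) (hdiag : ∀ v, M v v = 0) :
    ∀ (N : ℕ) (L : List V), L.length ≤ N → (∀ v, Even (L.count v)) →
      (L.map β).prod = eps (invS M L) • 1 := by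
  intro N
  induction N with
  | zero =>
      intro L hL _
      rw [Nat.le_zero, List.length_eq_zero_iff] at hL
      subst hL
      simp [invS, eps_zero]
  | succ N ih =>
      intro L hL hev
      match L with
      | [] => simp [invS, eps_zero]
      | x :: t =>
          have hxt : x ∈ t := by
            have := hev x
            rw [List.count_cons_self] at this
            rcases this with ⟨m, hm⟩
            have : t.count x = 2 * m - 1 := by omega
            have hpos : 0 < t.count x := by omega
            exact List.count_pos_iff.mp hpos
          obtain ⟨t₁, t₂, rfl⟩ := List.append_of_mem hxt
          have hlen : (t₁ ++ t₂).length ≤ N := by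
            have := hL
            simp only [List.length_cons, List.length_append] at this ⊢
            omega
          have hev' : ∀ v, Even ((t₁ ++ t₂).count v) := by
            intro v
            have := hev v
            by_cases hv : v = x
            · subst hv
              simp only [List.count_cons_self, List.count_append, List.count_cons_self] at this
              simp only [List.count_append]
              rcases this with ⟨m, hm⟩
              exact ⟨m - 1, by omega⟩
            · simp only [List.count_cons, List.count_append, if_neg (Ne.symm hv ∘ Eq.symm),
                List.count_cons] at this ⊢
              simpa [hv, Ne.symm hv] using this
          have hprod : ((x :: (t₁ ++ x :: t₂)).map β).prod
              = eps ((t₁.map fun y => M x y).sum) • ((t₁ ++ t₂).map β).prod := by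
            simp only [List.map_cons, List.prod_cons, List.map_append, List.prod_append]
            rw [← mul_assoc ((t₁.map β).prod) (β x) ((t₂.map β).prod)]
            rw [prod_move M β hcomm hsym x t₁]
            rw [smul_mul_assoc, mul_smul_comm, ← mul_assoc, ← mul_assoc, hsq x, one_mul]
          rw [hprod, ih _ hlen hev', smul_smul, ← eps_add, ← invS_surgery M hsym hdiag]

end Lists

/-! ### Symplectic realization of alternating forms over ZMod 2 -/

section Realize

universe u

lemma sp_pair_expand (a b c d : ZMod 2) : sp (a, b) (c, d) = a * d + b * c := rfl

lemma two_eq_zero : (2 : ZMod 2) = 0 := by decide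

theorem realize (N : ℕ) :
    ∀ (Q : Type u) [AddCommGroup Q] [Module (ZMod 2) Q] [FiniteDimensional (ZMod 2) Q],
    Module.finrank (ZMod 2) Q ≤ N →
    ∀ β : Q →ₗ[ZMod 2] Q →ₗ[ZMod 2] ZMod 2,
    (∀ x y, β x y = β y x) → (∀ x, β x x = 0) →
    ∃ k : ℕ, 1 ≤ k ∧ ∃ φ : Q →ₗ[ZMod 2] (Fin k → ZMod 2 × ZMod 2),
      (∀ x y, Sp (φ x) (φ y) = β x y) ∧ (∀ x, (∀ y, β x y = 0) → φ x = 0) := by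
  induction N with
  | zero =>
      intro Q _ _ _ hrank β hsym halt
      have h0 : Module.finrank (ZMod 2) Q = 0 := Nat.le_zero.mp hrank
      have hsub : Subsingleton Q := Module.finrank_zero_iff.mp h0
      refine ⟨1, le_refl 1, 0, fun x y => ?_, fun x _ => rfl⟩
      have hx : x = 0 := Subsingleton.elim x 0
      subst hx
      simp [Sp, sp]
  | succ N ih =>
      intro Q _ _ _ hrank β hsym halt
      by_cases hβ : ∀ x y, β x y = 0
      · exact ⟨1, le_refl 1, 0, fun x y => by simp [Sp, sp, hβ x y], fun x _ => rfl⟩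
      push_neg at hβ
      obtain ⟨u, v, huv0⟩ := hβ
      have huv : β u v = 1 := by
        rcases z2 (β u v) with h | h
        · exact absurd h huv0
        · exact h
      have hvu : β v u = 1 := by rw [hsym v u, huv]
      set Q' : Submodule (ZMod 2) Q := LinearMap.ker (β u) ⊓ LinearMap.ker (β v) with hQ'
      have hrank' : Module.finrank (ZMod 2) ↥Q' ≤ N := by
        have h1 : LinearMap.ker (β v) ≠ ⊤ := by
          intro h
          have hu : u ∈ LinearMap.ker (β v) := h ▸ Submodule.mem_top
          have : β v u = 0 := hu
          rw [hvu] at this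
          exact one_ne_zero this
        have h2 : Module.finrank (ZMod 2) ↥(LinearMap.ker (β v)) < Module.finrank (ZMod 2) Q :=
          Submodule.finrank_lt h1
        have h4 : Module.finrank (ZMod 2) ↥Q'
            ≤ Module.finrank (ZMod 2) ↥(LinearMap.ker (β v)) :=
          Submodule.finrank_mono inf_le_right
        omega
      set β' : ↥Q' →ₗ[ZMod 2] ↥Q' →ₗ[ZMod 2] ZMod 2 := β.compl₁₂ Q'.subtype Q'.subtype with hβ'
      obtain ⟨k', hk', φ', hφ'1, hφ'2⟩ := ih ↥Q' hrank' β'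
        (fun x y => hsym x y) (fun x => halt x)
      set ρ : Q →ₗ[ZMod 2] Q :=
        LinearMap.id + (β v).smulRight u + (β u).smulRight v with hρ
      have hρ_apply : ∀ x, ρ x = x + (β v x) • u + (β u x) • v := fun x => rfl
      have hρ_mem : ∀ x, ρ x ∈ Q' := by
        intro x
        constructor
        · show β u (ρ x) = 0
          rw [hρ_apply]
          simp only [map_add, LinearMap.map_smul, smul_eq_mul]
          rw [halt u, huv, hsym u x]
          linear_combination (β x u) * two_eq_zero
        · show β v (ρ x) = 0
          rw [hρ_apply]
          simp only [map_add, LinearMap.map_smul, smul_eq_mul]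
          rw [halt v, hvu]
          linear_combination (β v x) * two_eq_zero
      set ρ' : Q →ₗ[ZMod 2] ↥Q' := LinearMap.codRestrict Q' ρ hρ_mem with hρ'
      refine ⟨k' + 1, by omega, ?_⟩
      set φfun : Q → (Fin (k' + 1) → ZMod 2 × ZMod 2) :=
        fun x => Fin.cons (β v x, β u x) (φ' (ρ' x)) with hφfun
      have hadd : ∀ x y, φfun (x + y) = φfun x + φfun y := by
        intro x y
        funext i
        refine Fin.cases ?_ (fun j => ?_) i
        · simp [hφfun, Prod.ext_iff]
        · simp [hφfun]
      have hsmul : ∀ (c : ZMod 2) x, φfun (c • x) = c • φfun x := by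
        intro c x
        rcases z2 c with h | h <;> subst h
        · have h0 : φfun 0 = 0 := by
            funext i
            refine Fin.cases ?_ (fun j => ?_) i <;> simp [hφfun, Prod.ext_iff]
          simp [h0]
        · simp
      set φ : Q →ₗ[ZMod 2] (Fin (k' + 1) → ZMod 2 × ZMod 2) :=
        { toFun := φfun, map_add' := hadd, map_smul' := hsmul } with hφ
      have hφ_apply : ∀ x, φ x = Fin.cons (β v x, β u x) (φ' (ρ' x)) := fun _ => rfl
      have hβρ : ∀ x y, β (ρ x) (ρ y) = β x y + (β v y) * (β u x) + (β u y) * (β v x) := by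
        intro x y
        rw [hρ_apply, hρ_apply]
        simp only [map_add, LinearMap.map_smul, LinearMap.add_apply, LinearMap.smul_apply,
          smul_eq_mul]
        rw [halt u, halt v, huv, hvu, hsym x u, hsym x v]
        linear_combination (β v y * β u x + β u y * β v x) * two_eq_zero
      refine ⟨φ, ?_, ?_⟩
      · intro x y
        rw [hφ_apply, hφ_apply]
        have hSp : Sp (Fin.cons (β v x, β u x) (φ' (ρ' x)))
            (Fin.cons (β v y, β u y) (φ' (ρ' y)))
            = sp (β v x, β u x) (β v y, β u y) + Sp (φ' (ρ' x)) (φ' (ρ' y)) := by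
          unfold Sp
          rw [Fin.sum_univ_succ]
          simp
        rw [hSp, hφ'1]
        have hby : β' (ρ' x) (ρ' y) = β (ρ x) (ρ y) := rfl
        rw [hby, hβρ, sp_pair_expand]
        linear_combination (β v x * β u y + β u x * β v y) * two_eq_zero
      · intro x hx
        have ha : β v x = 0 := by rw [hsym v x]; exact hx v
        have hb : β u x = 0 := by rw [hsym u x]; exact hx u
        have hρx : ρ x = x := by rw [hρ_apply, ha, hb, zero_smul, zero_smul, add_zero, add_zero]
        have hval : ((ρ' x : Q)) = x := hρx
        have hz : φ' (ρ' x) = 0 := by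
          apply hφ'2
          intro y'
          have : β' (ρ' x) y' = β (ρ' x : Q) (y' : Q) := rfl
          rw [this, hval]
          exact hx _
        rw [hφ_apply, ha, hb, hz]
        funext i
        refine Fin.cases ?_ (fun j => ?_) i <;> simp [Prod.ext_iff]
end Realize

/-! ### Assembly -/

section Assembly

variable {V E : Type*} [LinearOrder V] [Fintype E]

lemma sort_map_sum {A : Type*} [AddCommMonoid A] (s : Finset V) (g : V → A) :
    ((s.sort (· ≤ ·)).map g).sum = ∑ u ∈ s, g u := by
  rw [← Finset.sum_map_toList]
  exact ((Finset.sort_perm_toList s _).map g).sum_eq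

lemma sort_map_prod {A : Type*} [CommMonoid A] (s : Finset V) (g : V → A) :
    ((s.sort (· ≤ ·)).map g).prod = ∏ u ∈ s, g u := by
  rw [← Finset.prod_map_toList]
  exact ((Finset.sort_perm_toList s _).map g).prod_eq

lemma one_ne_zero_mat {n : Type*} [Fintype n] [DecidableEq n] [Nonempty n] :
    (1 : Matrix n n ℂ) ≠ 0 := by
  intro h
  have := congrFun (congrFun h (Classical.arbitrary n)) (Classical.arbitrary n)
  simp [Matrix.one_apply] at this

lemma smul_one_inj {n : Type*} [Fintype n] [DecidableEq n] [Nonempty n] {c d : ℂ}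
    (h : c • (1 : Matrix n n ℂ) = d • 1) : c = d := by
  have := congrFun (congrFun h (Classical.arbitrary n)) (Classical.arbitrary n)
  simpa [Matrix.one_apply] using this

lemma smul_self_eq {n : Type*} [Fintype n] [DecidableEq n] {c : ℂ} {X : Matrix n n ℂ}
    (hX : X ≠ 0) (h : X = c • X) : c = 1 := by
  obtain ⟨i, j, hij⟩ : ∃ i j, X i j ≠ 0 := by
    by_contra hc
    push_neg at hc
    exact hX (by ext i j; simp [hc i j])
  have := congrFun (congrFun h i) j
  rw [Matrix.smul_apply, smul_eq_mul] at this
  have h2 : (c - 1) * X i j = 0 := by linear_combination -this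
  rcases mul_eq_zero.mp h2 with h3 | h3
  · exact sub_eq_zero.mp h3
  · exact absurd h3 hij

lemma prodBmat {k : ℕ} (p : V → Fin k → ZMod 2 × ZMod 2) (l : List V) :
    ∃ c : ℂ, c ≠ 0 ∧ (l.map fun v => Bmat (p v)).prod = c • Bmat ((l.map p).sum) := by
  induction l with
  | nil => exact ⟨1, one_ne_zero, by simp [Bmat_zero]⟩
  | cons x t ih =>
      obtain ⟨c, hc, hp⟩ := ih
      obtain ⟨d, hd, hm⟩ := Bmat_mul_exists (p x) ((t.map p).sum)
      refine ⟨d * c, mul_ne_zero hd hc, ?_⟩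
      rw [mul_comm]
      rw [List.map_cons, List.prod_cons, hp, mul_smul_comm, hm, List.map_cons, List.sum_cons,
        smul_smul]

lemma list_prod_pm (l : List ℂ) (h : ∀ x ∈ l, x = 1 ∨ x = -1) : l.prod = 1 ∨ l.prod = -1 := by
  induction l with
  | nil => simp
  | cons x t ih =>
      rcases h x List.mem_cons_self with hx | hx <;>
        rcases ih (fun y hy => h y (List.mem_cons_of_mem _ hy)) with ht | ht <;>
        rw [List.prod_cons, hx, ht] <;> norm_num

lemma counts_even (edge : E → Finset V)
    (hdeg : ∀ v : V, Even (Finset.univ.filter (fun e : E => v ∈ edge e)).card)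
    (le : List E) (hnd : le.Nodup) (hmem : ∀ e : E, e ∈ le) (v : V) :
    Even ((vertexList edge le).count v) := by
  classical
  rw [vertexList, List.count_flatten, List.map_map]
  have hc : ∀ e : E, (List.count v ∘ fun e => (edge e).sort (· ≤ ·)) e
      = if v ∈ edge e then 1 else 0 := by
    intro e
    by_cases h : v ∈ edge e
    · rw [if_pos h]
      exact List.count_eq_one_of_mem (Finset.sort_nodup _ _) ((Finset.mem_sort _).2 h)
    · rw [if_neg h]
      exact List.count_eq_zero_of_not_mem fun hm => h ((Finset.mem_sort _).1 hm)
  rw [List.map_congr_left (fun e _ => hc e)]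
  rw [Finset.sum_list_map_count]
  have huniv : le.toFinset = Finset.univ := Finset.eq_univ_iff_forall.2 fun e =>
    List.mem_toFinset.2 (hmem e)
  rw [huniv]
  have : ∀ e : E, List.count e le • (if v ∈ edge e then 1 else 0)
      = (if v ∈ edge e then 1 else 0) := by
    intro e
    rw [List.count_eq_one_of_mem hnd (hmem e), one_smul]
  rw [Finset.sum_congr rfl fun e _ => this e, ← Finset.card_filter]
  exact hdeg v

lemma flatten_prod {n : Type*} [Fintype n] [DecidableEq n] (edge : E → Finset V)
    (le : List E) (β : V → Matrix n n ℂ) :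
    (le.map fun e => edgeProd β (edge e)).prod = ((vertexList edge le).map β).prod := by
  rw [vertexList, List.map_flatten, List.prod_flatten, List.map_map, List.map_map]
  rfl

lemma core_prod (edge : E → Finset V)
    (hdeg : ∀ v : V, Even (Finset.univ.filter (fun e : E => v ∈ edge e)).card)
    (le : List E) (hnd : le.Nodup) (hmem : ∀ e : E, e ∈ le)
    {k : ℕ} (p : V → Fin k → ZMod 2 × ZMod 2)
    (M : Matrix V V (ZMod 2)) (hM : ∀ u w, M u w = Sp (p u) (p w)) :
    (le.map fun e => edgeProd (fun v => Bmat (p v)) (edge e)).prod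
      = eps (inversionSum M (vertexList edge le)) • 1 := by
  rw [flatten_prod, inversionSum_eq_invS]
  exact claimB M (fun v => Bmat (p v))
    (fun u w => by rw [hM u w]; exact Bmat_comm (p u) (p w))
    (fun v => Bmat_sq (p v))
    (fun u w => by rw [hM u w, hM w u]; exact Sp_comm _ _)
    (fun v => by rw [hM v v]; exact Sp_self _)
    (vertexList edge le).length _ (le_refl _)
    (counts_even edge hdeg le hnd hmem)

/-- the inversion sum as a linear map in the matrix -/
lemma invS_add (A B : Matrix V V (ZMod 2)) (l : List V) :
    invS (A + B) l = invS A l + invS B l := by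
  induction l with
  | nil => simp [invS]
  | cons x t ih =>
      show (t.map fun y => fterm (A + B) x y).sum + invS (A + B) t = _
      rw [ih]
      have : ∀ y, fterm (A + B) x y = fterm A x y + fterm B x y := by
        intro y
        unfold fterm
        by_cases h : y < x
        · simp [h, Matrix.add_apply]
        · simp [h]
      rw [List.map_congr_left fun y _ => this y, ← lsum_add]
      show _ = ((t.map fun y => fterm A x y).sum + invS A t)
        + ((t.map fun y => fterm B x y).sum + invS B t)
      abel

lemma invS_zero (l : List V) : invS (0 : Matrix V V (ZMod 2)) l = 0 := by
  induction l with
  | nil => rfl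
  | cons x t ih =>
      show (t.map fun y => fterm (0 : Matrix V V (ZMod 2)) x y).sum + invS 0 t = 0
      rw [ih, add_zero]
      have : ∀ y, fterm (0 : Matrix V V (ZMod 2)) x y = 0 := by
        intro y
        unfold fterm
        simp
      rw [List.map_congr_left fun y _ => this y]
      simp

noncomputable def invF (l : List V) : Matrix V V (ZMod 2) →ₗ[ZMod 2] ZMod 2 where
  toFun A := invS A l
  map_add' A B := invS_add A B l
  map_smul' c A := by
    rcases z2 c with h | h <;> subst h
    · simp [invS_zero]
    · simp

end Assembly

section Assembly2

variable {V E : Type*} [LinearOrder V] [Fintype E]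

lemma pm_ne {c : ℂ} (h : c = 1 ∨ c = -1) : c ≠ 0 := by
  rcases h with h | h <;> rw [h] <;> norm_num

lemma Sp_zero_left {k : ℕ} (t : Fin k → ZMod 2 × ZMod 2) :
    Sp (0 : Fin k → ZMod 2 × ZMod 2) t = 0 := by
  unfold Sp sp
  simp

lemma Sp_sum_left {k : ℕ} {ι : Type*} (s : Finset ι) (g : ι → Fin k → ZMod 2 × ZMod 2)
    (t : Fin k → ZMod 2 × ZMod 2) :
    Sp (∑ i ∈ s, g i) t = ∑ i ∈ s, Sp (g i) t := by
  induction s using Finset.cons_induction with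
  | empty => simp [Sp_zero_left]
  | cons a s ha ih => rw [Finset.sum_cons, Finset.sum_cons, Sp_add_left, ih]

lemma scalar_extract {n : Type*} [Fintype n] [DecidableEq n] {a d : ℂ} (ha : a ≠ 0)
    {X : Matrix n n ℂ} (h : a • X = d • 1) : X = (a⁻¹ * d) • 1 := by
  have h2 := congrArg (fun Y => a⁻¹ • Y) h
  simpa [smul_smul, inv_mul_cancel₀ ha] using h2

lemma flatten_prod_gen {A : Type*} [Monoid A] (edge : E → Finset V) (le : List E) (g : V → A) :
    (le.map fun e => (((edge e).sort (· ≤ ·)).map g).prod).prod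
      = ((vertexList edge le).map g).prod := by
  rw [vertexList, List.map_flatten, List.prod_flatten, List.map_map, List.map_map]
  rfl

lemma prod_sq_comm {n : Type*} [Fintype n] [DecidableEq n] (l : List V)
    (β : V → Matrix n n ℂ)
    (hc : ∀ u ∈ l, ∀ w ∈ l, β u * β w = β w * β u) (hsq : ∀ v ∈ l, β v * β v = 1) :
    (l.map β).prod * (l.map β).prod = 1 := by
  induction l with
  | nil => simp
  | cons x t ih =>
      have hxt : β x * (t.map β).prod = (t.map β).prod * β x := by
        have : Commute (β x) ((t.map β).prod) := by
          apply Commute.list_prod_right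
          intro y hy
          obtain ⟨w, hw, rfl⟩ := List.mem_map.mp hy
          exact hc x List.mem_cons_self w (List.mem_cons_of_mem _ hw)
        exact this.eq
      rw [List.map_cons, List.prod_cons]
      calc β x * (t.map β).prod * (β x * (t.map β).prod)
          = β x * ((t.map β).prod * β x) * (t.map β).prod := by
            rw [mul_assoc, mul_assoc, mul_assoc]
        _ = β x * (β x * (t.map β).prod) * (t.map β).prod := by rw [hxt]
        _ = (β x * β x) * ((t.map β).prod * (t.map β).prod) := by
            rw [mul_assoc, mul_assoc, mul_assoc]
        _ = 1 := by
            rw [hsq x List.mem_cons_self,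
              ih (fun u hu w hw => hc u (List.mem_cons_of_mem _ hu) w (List.mem_cons_of_mem _ hw))
                (fun v hv => hsq v (List.mem_cons_of_mem _ hv)), one_mul]

lemma edge_scalar_pm {n : Type*} [Fintype n] [DecidableEq n] [Nonempty n]
    {X : Matrix n n ℂ} {c : ℂ} (h : X = c • 1) (hsq : X * X = 1) : c = 1 ∨ c = -1 := by
  have h1 : X * X = (c * c) • (1 : Matrix n n ℂ) := by
    rw [h, smul_mul_smul_comm, one_mul]
  have h2 : (c * c) • (1 : Matrix n n ℂ) = (1 : ℂ) • 1 := by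
    rw [← h1, hsq, one_smul]
  exact mul_self_eq_one_iff.mp (smul_one_inj h2)

end Assembly2


/-- For a proper Eulerian hypergraph `H` and any basis `B` of its valid Gram
space, `H` has a `k`-qubit Pauli-based magic assignment for some `k ≥ 1` iff `B` contains a
magic Gram matrix. -/
theorem stmt0 {V E : Type*} [Fintype V] [LinearOrder V] [Fintype E]
    (edge : E → Finset V) (hH : ProperEulerian edge)
    (le : List E) (hnd : le.Nodup) (hmem : ∀ e : E, e ∈ le)
    (B : Set (Matrix V V (ZMod 2)))
    (hBvalid : ∀ M ∈ B, IsValidGram edge M)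
    (hBindep : LinearIndependent (ZMod 2) ((↑) : B → Matrix V V (ZMod 2)))
    (hBspan : ∀ M : Matrix V V (ZMod 2), IsValidGram edge M →
      M ∈ Submodule.span (ZMod 2) B) :
    (∃ k : ℕ, 1 ≤ k ∧ ∃ α : V → Matrix (Fin k → Fin 2) (Fin k → Fin 2) ℂ,
        IsPauliMagicAssignment k edge α) ↔
      ∃ M ∈ B, MagicGram edge le M := by
  classical
  constructor
  · rintro ⟨k, hk, α, hobs, hcommute, hprodpm, hodd⟩
    haveI : Nonempty (Fin k → Fin 2) := ⟨fun _ => 0⟩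
    -- encode the observables as signed Pauli strings
    have hchoice : ∀ v : V, ∃ (c : ℂ) (q : Fin k → ZMod 2 × ZMod 2),
        (c = 1 ∨ c = -1) ∧ α v = c • Bmat q := by
      intro v
      obtain ⟨c, P, hc, hP, hval⟩ := hobs v
      have hsig : ∀ i, ∃ s, sig s = P i := by
        intro i
        rcases hP i with h | h | h | h
        · exact ⟨0, by rw [sig00, h, Matrix.one_fin_two]⟩
        · exact ⟨(1, 0), by rw [sig10, h]; rfl⟩
        · exact ⟨1, by rw [sig11, h]; rfl⟩
        · exact ⟨(0, 1), by rw [sig01, h]; rfl⟩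
      choose q hq using hsig
      refine ⟨c, q, hc, ?_⟩
      rw [hval]
      have h5 : Bmat q = pauliTensor k P := congrArg (pauliTensor k) (funext fun i => hq i)
      rw [h5]
    choose ε p hε hαv using hchoice
    set β : V → Matrix (Fin k → Fin 2) (Fin k → Fin 2) ℂ := fun v => Bmat (p v) with hβ
    set M : Matrix V V (ZMod 2) := Matrix.of fun u w => Sp (p u) (p w) with hMdef
    have hM : ∀ u w, M u w = Sp (p u) (p w) := fun u w => rfl
    set L := vertexList edge le with hLdef
    have hsortα : ∀ e : E, edgeProd α (edge e)
        = (((edge e).sort (· ≤ ·)).map ε).prod • edgeProd β (edge e) := by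
      intro e
      unfold edgeProd
      rw [List.map_congr_left fun v _ => hαv v, prod_map_smul]
    have hεne : ∀ e : E, (((edge e).sort (· ≤ ·)).map ε).prod ≠ 0 := by
      intro e
      apply pm_ne
      apply list_prod_pm
      intro x hx
      obtain ⟨v, hv, rfl⟩ := List.mem_map.mp hx
      exact hε v
    -- the per-edge symplectic vectors sum to zero
    have hedgeβ : ∀ e : E, edgeProd β (edge e)
        = (((edge e).sort (· ≤ ·)).map fun v => Bmat (p v)).prod := fun _ => rfl
    have hesum : ∀ e : E, ((((edge e).sort (· ≤ ·)).map p).sum) = 0 := by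
      intro e
      obtain ⟨c, hc, hcprod⟩ := prodBmat p ((edge e).sort (· ≤ ·))
      have key : ∀ dd : ℂ, edgeProd α (edge e) = dd • 1 →
          ((((edge e).sort (· ≤ ·)).map p).sum) = 0 := by
        intro dd hdd
        have h1 : edgeProd α (edge e) = ((((edge e).sort (· ≤ ·)).map ε).prod * c) •
            Bmat ((((edge e).sort (· ≤ ·)).map p).sum) := by
          rw [hsortα e, hedgeβ e, hcprod, smul_smul]
        rw [hdd] at h1
        have h2 := scalar_extract (mul_ne_zero (hεne e) hc) h1.symm
        exact Bmat_scalar _ _ h2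
      rcases hprodpm e with h | h
      · exact key 1 (by rw [h, one_smul])
      · exact key (-1) (by rw [h, neg_smul, one_smul])
    -- M is a valid Gram matrix
    have hβcomm : ∀ e : E, ∀ u ∈ edge e, ∀ w ∈ edge e, β u * β w = β w * β u := by
      intro e u hu w hw
      have h1 := (hcommute e u hu w hw).eq
      rw [hαv u, hαv w, smul_mul_smul_comm, smul_mul_smul_comm] at h1
      rw [mul_comm (ε w) (ε u)] at h1
      exact smul_right_injective _ (mul_ne_zero (pm_ne (hε u)) (pm_ne (hε w))) h1
    have hvalid : IsValidGram edge M := by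
      refine ⟨?_, fun v => by rw [hM]; exact Sp_self _, ?_, ?_⟩
      · apply Matrix.ext
        intro i j
        rw [Matrix.transpose_apply, hM, hM]
        exact Sp_comm _ _
      · intro e u hu w hw
        have hcomm2 := Bmat_comm (p u) (p w)
        rw [← hM u w] at hcomm2
        have hXne : Bmat (p u) * Bmat (p w) ≠ 0 := by
          intro h0
          have h4 : (Bmat (p u) * Bmat (p w)) * (Bmat (p w) * Bmat (p u)) = 1 := by
            rw [mul_assoc, ← mul_assoc (Bmat (p w)), Bmat_sq, one_mul, Bmat_sq]
          rw [h0, zero_mul] at h4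
          exact one_ne_zero_mat h4.symm
        have hc3 : Bmat (p w) * Bmat (p u) = Bmat (p u) * Bmat (p w) :=
          hβcomm e w hw u hu
        have heps1 : eps (M u w) = 1 := by
          apply smul_self_eq hXne
          calc Bmat (p u) * Bmat (p w) = eps (M u w) • (Bmat (p w) * Bmat (p u)) := hcomm2
            _ = eps (M u w) • (Bmat (p u) * Bmat (p w)) := by rw [hc3]
        exact (eps_eq_one_iff _).mp heps1
      · intro e w
        have hsum : (∑ u ∈ edge e, M u w) = Sp (∑ u ∈ edge e, p u) (p w) := by
          rw [Sp_sum_left]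
          exact Finset.sum_congr rfl fun u _ => hM u w
        rw [hsum, ← sort_map_sum (edge e) p, hesum e, Sp_zero_left]
    -- the total product, two ways
    have hd : ∀ e : E, ∃ dd : ℂ, (dd = 1 ∨ dd = -1) ∧ edgeProd α (edge e) = dd • 1 := by
      intro e
      rcases hprodpm e with h | h
      · exact ⟨1, Or.inl rfl, by rw [h, one_smul]⟩
      · exact ⟨-1, Or.inr rfl, by rw [h, neg_smul, one_smul]⟩
    choose d hd1 hd2 using hd
    have hone : (le.map fun _ : E => (1 : Matrix (Fin k → Fin 2) (Fin k → Fin 2) ℂ)).prod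
        = 1 := by
      rw [List.map_const', List.prod_replicate, one_pow]
    have htotal1 : (le.map fun e => edgeProd α (edge e)).prod = ((le.map d).prod) • 1 := by
      rw [List.map_congr_left fun e _ => hd2 e]
      rw [show (fun e => d e • (1 : Matrix (Fin k → Fin 2) (Fin k → Fin 2) ℂ))
        = fun e => d e • (fun _ : E => (1 : Matrix (Fin k → Fin 2) (Fin k → Fin 2) ℂ)) e
        from rfl]
      rw [prod_map_smul, hone]
    have htotal2 : (le.map fun e => edgeProd α (edge e)).prod
        = ((L.map ε).prod * eps (inversionSum M L)) • 1 := by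
      rw [List.map_congr_left fun e _ => hsortα e, prod_map_smul,
        core_prod edge hH.1 le hnd hmem p M hM, flatten_prod_gen, smul_smul]
    have hLε : (L.map ε).prod = 1 := by
      rw [Finset.prod_list_map_count]
      apply Finset.prod_eq_one
      intro v _
      rcases hε v with h | h
      · rw [h, one_pow]
      · rw [h]
        exact Even.neg_one_pow (counts_even edge hH.1 le hnd hmem v)
    have heq : (le.map d).prod = eps (inversionSum M L) := by
      apply smul_one_inj (n := Fin k → Fin 2)
      rw [← htotal1, htotal2, hLε, one_mul]
    have hletofin : le.toFinset = Finset.univ :=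
      Finset.eq_univ_iff_forall.2 fun e => List.mem_toFinset.2 (hmem e)
    have hprodd : (le.map d).prod = ∏ e : E, d e := by
      rw [Finset.prod_list_map_count, hletofin]
      exact Finset.prod_congr rfl fun e _ => by
        rw [List.count_eq_one_of_mem hnd (hmem e), pow_one]
    have hfilter : ∏ e : E, d e
        = (-1 : ℂ) ^ (Finset.univ.filter fun e => d e = -1).card := by
      rw [← Finset.prod_filter_mul_prod_filter_not Finset.univ (fun e => d e = -1)]
      rw [Finset.prod_congr rfl (fun e he => (Finset.mem_filter.mp he).2), Finset.prod_const]
      rw [Finset.prod_eq_one, mul_one]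
      intro e he
      rcases hd1 e with h | h
      · exact h
      · exact absurd h (Finset.mem_filter.mp he).2
    have hcardeq : (Finset.univ.filter fun e => d e = -1).card
        = (Finset.univ.filter fun e => edgeProd α (edge e) = -1).card := by
      congr 1
      ext e
      simp only [Finset.mem_filter, Finset.mem_univ, true_and]
      constructor
      · intro h
        rw [hd2 e, h, neg_smul, one_smul]
      · intro h
        rcases hd1 e with h' | h'
        · exfalso
          rw [hd2 e, h', one_smul] at h
          have : (1 : ℂ) • (1 : Matrix (Fin k → Fin 2) (Fin k → Fin 2) ℂ) = (-1 : ℂ) • 1 := by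
            rw [one_smul, neg_smul, one_smul]; exact h
          have := smul_one_inj this
          norm_num at this
        · exact h'
    have hodd' : Odd ((Finset.univ.filter fun e => edgeProd α (edge e) = -1).card) := by
      rwa [Nat.card_eq_fintype_card, Fintype.card_subtype] at hodd
    have heps : eps (inversionSum M L) = -1 := by
      rw [← heq, hprodd, hfilter, hcardeq]
      exact Odd.neg_one_pow hodd'
    have hinv1 : inversionSum M L = 1 := by
      rcases z2 (inversionSum M L) with h | h
      · rw [h, eps_zero] at heps; norm_num at heps
      · exact h
    -- basis argument
    by_contra hno
    push_neg at hno
    have hker : ∀ b ∈ B, b ∈ LinearMap.ker (invF L) := by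
      intro b hb
      have hval := hBvalid b hb
      have hne1 : inversionSum b L ≠ 1 := fun hmagic => hno b hb ⟨hval, hmagic⟩
      have : inversionSum b L = 0 := by
        rcases z2 (inversionSum b L) with h | h
        · exact h
        · exact absurd h hne1
      rw [LinearMap.mem_ker]
      show invS b L = 0
      rw [← inversionSum_eq_invS]
      exact this
    have hMker : M ∈ LinearMap.ker (invF L) :=
      (Submodule.span_le.2 hker) (hBspan M hvalid)
    rw [LinearMap.mem_ker] at hMker
    have : invS M L = 0 := hMker
    rw [← inversionSum_eq_invS, hinv1] at this
    exact absurd this one_ne_zero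
  · rintro ⟨b, hbB, hbvalid, hbinv⟩
    obtain ⟨hbsym, hbdiag, hbedge, hbsum⟩ := hbvalid
    have hbsym' : ∀ u w, b w u = b u w := fun u w => by
      conv_lhs => rw [← hbsym]
      rfl
    -- the bilinear form attached to b
    set Bform : (V → ZMod 2) →ₗ[ZMod 2] (V → ZMod 2) →ₗ[ZMod 2] ZMod 2 :=
      LinearMap.mk₂ (ZMod 2) (fun x y => dotProduct x (b.mulVec y))
        (fun x x' y => by
          show (x + x') ⬝ᵥ (b *ᵥ y) = x ⬝ᵥ (b *ᵥ y) + x' ⬝ᵥ (b *ᵥ y)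
          rw [add_dotProduct])
        (fun cc x y => by
          show (cc • x) ⬝ᵥ (b *ᵥ y) = cc • (x ⬝ᵥ (b *ᵥ y))
          rw [smul_dotProduct])
        (fun x y y' => by
          show x ⬝ᵥ (b *ᵥ (y + y')) = x ⬝ᵥ (b *ᵥ y) + x ⬝ᵥ (b *ᵥ y')
          rw [Matrix.mulVec_add, dotProduct_add])
        (fun cc x y => by
          show x ⬝ᵥ (b *ᵥ (cc • y)) = cc • (x ⬝ᵥ (b *ᵥ y))
          rw [Matrix.mulVec_smul, dotProduct_smul]) with hBformdef
    have hBapp : ∀ x y, Bform x y = dotProduct x (b.mulVec y) := fun x y => rfl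
    have hsymB : ∀ x y, Bform x y = Bform y x := by
      intro x y
      rw [hBapp, hBapp, Matrix.dotProduct_mulVec]
      have hvm : Matrix.vecMul x b = b.mulVec x := by
        conv_lhs => rw [← hbsym]
        exact Matrix.vecMul_transpose b x
      rw [hvm, dotProduct_comm]
    have haltB : ∀ x, Bform x x = 0 := by
      intro x
      rw [hBapp]
      have hexp : dotProduct x (b.mulVec x)
          = ∑ q ∈ Finset.univ ×ˢ Finset.univ, x q.1 * b q.1 q.2 * x q.2 := by
        rw [Finset.sum_product]
        simp only [dotProduct, Matrix.mulVec]
        exact Finset.sum_congr rfl fun u _ => by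
          rw [Finset.mul_sum]
          exact Finset.sum_congr rfl fun w _ => by ring
      rw [hexp]
      apply Finset.sum_involution (g := fun q _ => (q.2, q.1))
      · intro q _
        calc x q.1 * b q.1 q.2 * x q.2 + x (q.2, q.1).1 * b (q.2, q.1).1 (q.2, q.1).2
              * x (q.2, q.1).2
            = x q.1 * b q.1 q.2 * x q.2 + x q.1 * b q.1 q.2 * x q.2 := by
              show _ + x q.2 * b q.2 q.1 * x q.1 = _
              rw [hbsym' q.1 q.2]
              ring_nf
          _ = 0 := zmod2_add_self _
      · intro q _ hfq heq
        have h1 : q.2 = q.1 := congrArg Prod.fst heq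
        apply hfq
        have h2 : b q.1 q.2 = 0 := by rw [← h1] at *; rw [h1, hbdiag]
        rw [h2, mul_zero, zero_mul]
      · intro q _
        exact Finset.mem_product.2 ⟨Finset.mem_univ _, Finset.mem_univ _⟩
      · intro q _
        rfl
    obtain ⟨k, hk1, φ, hφ1, hφ2⟩ := realize (Module.finrank (ZMod 2) (V → ZMod 2))
      (V → ZMod 2) (le_refl _) Bform hsymB haltB
    set p : V → Fin k → ZMod 2 × ZMod 2 := fun v => φ (Pi.single v 1) with hpdef
    have hSp : ∀ u w, Sp (p u) (p w) = b u w := by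
      intro u w
      show Sp (φ (Pi.single u 1)) (φ (Pi.single w 1)) = b u w
      rw [hφ1, hBapp, Matrix.mulVec_single, single_dotProduct]
      simp
    have hchiB : ∀ e : E, ∀ y, Bform (∑ v ∈ edge e, Pi.single v (1 : ZMod 2)) y = 0 := by
      intro e y
      rw [map_sum, LinearMap.sum_apply]
      have hterm : ∀ v, Bform (Pi.single v (1 : ZMod 2)) y
          = ∑ w, b v w * y w := by
        intro v
        rw [hBapp, single_dotProduct, one_mul]
        rfl
      rw [Finset.sum_congr rfl fun v _ => hterm v, Finset.sum_comm]
      apply Finset.sum_eq_zero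
      intro w _
      rw [← Finset.sum_mul, hbsum e w, zero_mul]
    have hesum2 : ∀ e : E, (((edge e).sort (· ≤ ·)).map p).sum = 0 := by
      intro e
      rw [sort_map_sum]
      show (∑ v ∈ edge e, φ (Pi.single v 1)) = 0
      rw [← map_sum]
      exact hφ2 _ (hchiB e)
    set α : V → Matrix (Fin k → Fin 2) (Fin k → Fin 2) ℂ := fun v => Bmat (p v) with hα
    haveI : Nonempty (Fin k → Fin 2) := ⟨fun _ => 0⟩
    have hedgeα : ∀ e : E, ∃ cc : ℂ, (cc = 1 ∨ cc = -1) ∧ edgeProd α (edge e) = cc • 1 := by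
      intro e
      obtain ⟨cc, hc0, hcprod⟩ := prodBmat p ((edge e).sort (· ≤ ·))
      have h1 : edgeProd α (edge e) = cc • 1 := by
        show (((edge e).sort (· ≤ ·)).map fun v => Bmat (p v)).prod = cc • 1
        rw [hcprod, hesum2 e, Bmat_zero]
      have hsq : edgeProd α (edge e) * edgeProd α (edge e) = 1 := by
        apply prod_sq_comm
        · intro u hu w hw
          rw [Finset.mem_sort] at hu hw
          show Bmat (p u) * Bmat (p w) = Bmat (p w) * Bmat (p u)
          rw [Bmat_comm (p u) (p w), hSp u w, hbedge e u hu w hw, eps_zero, one_smul]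
        · intro v _
          exact Bmat_sq (p v)
      exact ⟨cc, edge_scalar_pm h1 hsq, h1⟩
    choose c hc1 hc2 using hedgeα
    refine ⟨k, hk1, α, ?_, ?_, ?_, ?_⟩
    · intro v
      exact ⟨1, fun i => sig (p v i), Or.inl rfl, fun i => sig_mem _, by rw [one_smul]; rfl⟩
    · intro e u hu w hw
      show α u * α w = α w * α u
      show Bmat (p u) * Bmat (p w) = Bmat (p w) * Bmat (p u)
      rw [Bmat_comm (p u) (p w), hSp u w, hbedge e u hu w hw, eps_zero, one_smul]
    · intro e
      rcases hc1 e with h | h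
      · left; rw [hc2 e, h, one_smul]
      · right; rw [hc2 e, h, neg_smul, one_smul]
    · -- parity
      have hone : (le.map fun _ : E => (1 : Matrix (Fin k → Fin 2) (Fin k → Fin 2) ℂ)).prod
          = 1 := by
        rw [List.map_const', List.prod_replicate, one_pow]
      have htotal1 : (le.map fun e => edgeProd α (edge e)).prod = ((le.map c).prod) • 1 := by
        rw [List.map_congr_left fun e _ => hc2 e]
        rw [show (fun e => c e • (1 : Matrix (Fin k → Fin 2) (Fin k → Fin 2) ℂ))
          = fun e => c e • (fun _ : E => (1 : Matrix (Fin k → Fin 2) (Fin k → Fin 2) ℂ)) e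
          from rfl]
        rw [prod_map_smul, hone]
      have htotal2 : (le.map fun e => edgeProd α (edge e)).prod
          = eps (inversionSum b (vertexList edge le)) • 1 :=
        core_prod edge hH.1 le hnd hmem p b fun u w => (hSp u w).symm
      have heqc : (le.map c).prod = -1 := by
        have h3 := smul_one_inj (n := Fin k → Fin 2) (htotal1.symm.trans htotal2)
        rw [h3, hbinv, eps_one]
      have hletofin : le.toFinset = Finset.univ :=
        Finset.eq_univ_iff_forall.2 fun e => List.mem_toFinset.2 (hmem e)
      have hprodd : (le.map c).prod = ∏ e : E, c e := by
        rw [Finset.prod_list_map_count, hletofin]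
        exact Finset.prod_congr rfl fun e _ => by
          rw [List.count_eq_one_of_mem hnd (hmem e), pow_one]
      have hfilter : ∏ e : E, c e
          = (-1 : ℂ) ^ (Finset.univ.filter fun e => c e = -1).card := by
        rw [← Finset.prod_filter_mul_prod_filter_not Finset.univ (fun e => c e = -1)]
        rw [Finset.prod_congr rfl (fun e he => (Finset.mem_filter.mp he).2), Finset.prod_const]
        rw [Finset.prod_eq_one, mul_one]
        intro e he
        rcases hc1 e with h | h
        · exact h
        · exact absurd h (Finset.mem_filter.mp he).2
      have hoddcard : Odd ((Finset.univ.filter fun e => c e = -1).card) := by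
        by_contra hev
        rw [Nat.not_odd_iff_even] at hev
        rw [hprodd, hfilter, Even.neg_one_pow hev] at heqc
        norm_num at heqc
      have hcardeq : (Finset.univ.filter fun e => c e = -1).card
          = (Finset.univ.filter fun e => edgeProd α (edge e) = -1).card := by
        congr 1
        ext e
        simp only [Finset.mem_filter, Finset.mem_univ, true_and]
        constructor
        · intro h
          rw [hc2 e, h, neg_smul, one_smul]
        · intro h
          rcases hc1 e with h' | h'
          · exfalso
            rw [hc2 e, h', one_smul] at h
            have h5 : (1 : ℂ) • (1 : Matrix (Fin k → Fin 2) (Fin k → Fin 2) ℂ)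
                = (-1 : ℂ) • 1 := by
              rw [one_smul, neg_smul, one_smul]; exact h
            have := smul_one_inj h5
            norm_num at this
          · exact h'
      rw [Nat.card_eq_fintype_card, Fintype.card_subtype, ← hcardeq]
      exact hoddcard
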